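/- Let p and t be real numbers with 0 < p < 1, t > 0, and p(1+t) < 1. Then the relative entropy satisfies RE(p + pt ‖ p) > p·t²·(1−t)/2; that is, p(1+t)·log(1+t) + (1 − p − pt)·log((1 − p − pt)/(1 − p)) > p·t²·(1−t)/2. -/

import Mathlib

lemma aux_log_lb (t : ℝ) (ht : 0 < t) : t - t ^ 2 / 2 < Real.log (1 + t) := by
  have h : StrictMonoOn (fun x : ℝ => Real.log (1 + x) - x + x ^ 2 / 2) (Set.Ici 0) := by
    apply strictMonoOn_of_deriv_pos (convex_Ici 0)
    · apply ContinuousOn.add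
      · apply ContinuousOn.sub
        · exact Real.continuousOn_log.comp (continuous_const.add continuous_id).continuousOn
            (fun x hx => by simp at hx ⊢; linarith)
        · exact continuousOn_id
      · exact (continuous_pow 2).continuousOn.div_const 2
    · intro x hx
      rw [interior_Ici] at hx
      have hx0 : (0:ℝ) < x := hx
      have h1 : HasDerivAt (fun x : ℝ => Real.log (1 + x) - x + x ^ 2 / 2)
          (1 / (1 + x) - 1 + x) x := by
        have hlog : HasDerivAt (fun x : ℝ => Real.log (1 + x)) (1 / (1 + x)) x := by
          have := (Real.hasDerivAt_log (by linarith : (1:ℝ) + x ≠ 0)).comp x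
            ((hasDerivAt_id x).const_add 1)
          simpa [one_div, Function.comp_def] using this
        have := (hlog.sub (hasDerivAt_id x)).add
          ((hasDerivAt_pow 2 x).div_const 2)
        exact this.congr_deriv (by norm_num)
      rw [h1.deriv]
      have : 1 / (1 + x) - 1 + x = x ^ 2 / (1 + x) := by
        field_simp; ring
      rw [this]
      positivity
  have := h (Set.self_mem_Ici) (Set.mem_Ici.mpr ht.le) ht
  simp at this
  linarith

/-- for `0 < p < 1`, `t > 0` with `p(1+t) < 1`, the relative entropy
satisfies `RE(p + pt ‖ p) > p·t²·(1−t)/2`. -/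
theorem stmt8 (p t : ℝ) (hp : 0 < p) (hp1 : p < 1) (ht : 0 < t) (hpt : p * (1 + t) < 1) :
    p * (1 + t) * Real.log (1 + t) +
      (1 - p - p * t) * Real.log ((1 - p - p * t) / (1 - p)) >
    p * t ^ 2 * (1 - t) / 2 := by
  have hq : 0 < 1 - p - p * t := by nlinarith
  have hr : 0 < 1 - p := by linarith
  -- lower bound for second log: log x ≥ 1 - 1/x
  have hx : (0:ℝ) < (1 - p - p * t) / (1 - p) := by positivity
  have hlog2 : Real.log ((1 - p - p * t) / (1 - p)) ≥ 1 - (1 - p) / (1 - p - p * t) := by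
    have h := Real.log_le_sub_one_of_pos (show (0:ℝ) < (1 - p) / (1 - p - p * t) by positivity)
    have hinv : Real.log ((1 - p) / (1 - p - p * t)) =
        - Real.log ((1 - p - p * t) / (1 - p)) := by
      rw [← Real.log_inv]
      congr 1
      field_simp
    rw [hinv] at h
    linarith
  have h2 : (1 - p - p * t) * Real.log ((1 - p - p * t) / (1 - p)) ≥ - (p * t) := by
    have := mul_le_mul_of_nonneg_left hlog2 hq.le
    have heq : (1 - p - p * t) * (1 - (1 - p) / (1 - p - p * t)) = - (p * t) := by
      field_simp
      ring
    nlinarith [this]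
  have h1 : p * (1 + t) * Real.log (1 + t) > p * (1 + t) * (t - t ^ 2 / 2) := by
    have := aux_log_lb t ht
    have hpos : 0 < p * (1 + t) := by positivity
    nlinarith
  nlinarith [h1, h2]
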